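/- Let n ≥ 2 be an integer, define a_0 = n, a_{k+1} = a_k^2 - 1, and let P(n) be the set of all primes dividing some a_k. Then P(n) is infinite. -/
import Mathlib


/-- The sequence `a 0 = n`, `a (k+1) = (a k)^2 - 1`. -/
def seqA (n : ℤ) : ℕ → ℤ
  | 0 => n
  | k + 1 => (seqA n k) ^ 2 - 1

/-- `P n` is the set of primes dividing some term of the sequence. -/
def primeSet (n : ℤ) : Set ℕ := {p : ℕ | p.Prime ∧ ∃ k, (p : ℤ) ∣ seqA n k}

lemma seqA_ge (n : ℤ) (hn : 2 ≤ n) : ∀ k, 2 ≤ seqA n k := by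
  intro k
  induction k with
  | zero => exact hn
  | succ k ih =>
    show 2 ≤ (seqA n k) ^ 2 - 1
    nlinarith

lemma seqA_succ_ge (n : ℤ) (hn : 2 ≤ n) (k : ℕ) : 3 ≤ seqA n (k + 1) := by
  have := seqA_ge n hn k
  show 3 ≤ (seqA n k) ^ 2 - 1
  nlinarith

lemma seqA_add_two (n : ℤ) (k : ℕ) :
    seqA n (k + 2) = (seqA n k) ^ 2 * ((seqA n k) ^ 2 - 2) := by
  show ((seqA n k) ^ 2 - 1) ^ 2 - 1 = _
  ring

lemma seqA_dvd_add_two_mul (n : ℤ) (k t : ℕ) : seqA n k ∣ seqA n (k + 2 * t) := by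
  induction t with
  | zero => simp
  | succ t ih =>
    have h : k + 2 * (t + 1) = (k + 2 * t) + 2 := by ring
    rw [h, seqA_add_two]
    exact ih.trans ((dvd_pow_self _ two_ne_zero).mul_right _)

lemma exists_odd_prime_factor (N : ℕ) (h2 : 2 ≤ N) (hodd : N % 2 = 1) :
    ∃ q, q.Prime ∧ q ≠ 2 ∧ q ∣ N := by
  refine ⟨N.minFac, Nat.minFac_prime (by omega), ?_, N.minFac_dvd⟩
  intro hq
  have h := N.minFac_dvd
  rw [hq] at h
  omega

lemma exists_odd_prime_dvd (a : ℤ) (ha : 3 ≤ a) :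
    ∃ q : ℕ, q.Prime ∧ q ≠ 2 ∧ (q : ℤ) ∣ a ^ 2 - 2 := by
  rcases Int.even_or_odd a with he | ho
  · obtain ⟨b, hb⟩ := he
    have hb2 : 2 ≤ b := by omega
    set r : ℤ := 2 * b ^ 2 - 1 with hr_def
    have hbsq : 4 ≤ b ^ 2 := by nlinarith
    have hr : 3 ≤ r := by omega
    have key : a ^ 2 - 2 = 2 * r := by rw [hb, hr_def]; ring
    have hcast : (r.toNat : ℤ) = r := Int.toNat_of_nonneg (by omega)
    have hodd : r.toNat % 2 = 1 := by omega
    obtain ⟨q, hq, hq2, hqd⟩ := exists_odd_prime_factor r.toNat (by omega) hodd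
    refine ⟨q, hq, hq2, ?_⟩
    rw [key]
    have : (q : ℤ) ∣ (r.toNat : ℤ) := Int.natCast_dvd_natCast.mpr hqd
    rw [hcast] at this
    exact this.mul_left 2
  · obtain ⟨b, hb⟩ := ho
    set m : ℤ := a ^ 2 - 2 with hm_def
    have hmb : m = 4 * b ^ 2 + 4 * b - 1 := by rw [hm_def, hb]; ring
    have hbsq : 0 ≤ b ^ 2 := sq_nonneg b
    have hm7 : 3 ≤ m := by nlinarith
    have hcast : (m.toNat : ℤ) = m := Int.toNat_of_nonneg (by omega)
    have hodd : m.toNat % 2 = 1 := by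
      have : m % 2 = 1 := by omega
      omega
    obtain ⟨q, hq, hq2, hqd⟩ := exists_odd_prime_factor m.toNat (by omega) hodd
    refine ⟨q, hq, hq2, ?_⟩
    have : (q : ℤ) ∣ (m.toNat : ℤ) := Int.natCast_dvd_natCast.mpr hqd
    rwa [hcast] at this

theorem primeSet_infinite (n : ℤ) (hn : 2 ≤ n) : (primeSet n).Infinite := by
  have key : ∀ m : ℕ, ∃ q : ℕ, q.Prime ∧ q ≠ 2 ∧ (q : ℤ) ∣ (seqA n (2 * m + 1)) ^ 2 - 2 :=
    fun m => exists_odd_prime_dvd _ (seqA_succ_ge n hn _)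
  choose f hfp hf2 hfd using key
  have hdvd : ∀ m, (f m : ℤ) ∣ seqA n (2 * m + 3) := by
    intro m
    have h3 : 2 * m + 3 = (2 * m + 1) + 2 := by ring
    rw [h3, seqA_add_two]
    exact (hfd m).mul_left _
  have hnot : ∀ m, ¬ (f m : ℤ) ∣ seqA n (2 * m + 1) := by
    intro m hd
    have h2 : (f m : ℤ) ∣ 2 := by
      have hsq : (f m : ℤ) ∣ (seqA n (2 * m + 1)) ^ 2 := dvd_pow hd two_ne_zero
      have := dvd_sub hsq (hfd m)
      simpa using this
    have h2' : f m ∣ 2 := by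
      have : (f m : ℤ) ∣ ((2 : ℕ) : ℤ) := by exact_mod_cast h2
      exact_mod_cast this
    exact hf2 m ((Nat.prime_dvd_prime_iff_eq (hfp m) Nat.prime_two).mp h2')
  have hchain : ∀ m1 m2 : ℕ, m1 < m2 → (f m1 : ℤ) ∣ seqA n (2 * m2 + 1) := by
    intro m1 m2 hlt
    have hidx : 2 * m2 + 1 = (2 * m1 + 3) + 2 * (m2 - m1 - 1) := by omega
    rw [hidx]
    exact (hdvd m1).trans (seqA_dvd_add_two_mul n _ _)
  have hinj : Function.Injective f := by
    intro m1 m2 h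
    rcases lt_trichotomy m1 m2 with hlt | heq | hgt
    · exact absurd (h ▸ hchain m1 m2 hlt) (hnot m2)
    · exact heq
    · exact absurd (h.symm ▸ hchain m2 m1 hgt) (hnot m1)
  exact Set.infinite_of_injective_forall_mem hinj
    (fun m => ⟨hfp m, 2 * m + 3, hdvd m⟩)
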